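/- Let q : [0,∞) → [0,1] be integrable and define p(τ) = exp(-α∫₀^τ q(x)dx). Suppose q satisfies 1 - q(τ) = p(τ)/p(τ-1) for all τ > 1 (with p(u)=1 for u<0 interpreted appropriately). Then F(s,τ) = 1 + q(τ)(s-1)/(1-s+s·p(τ)) satisfies F(s,τ) = exp(α∫_{τ-1}^τ (F(s,u)-1) du) for all τ > 1 and s ∈ [0,1). -/

import Mathlib

open MeasureTheory Set intervalIntegral
open scoped ENNReal NNReal

lemma key_subst {q : ℝ → ℝ} (hm : Measurable q) (h0 : ∀ x, 0 ≤ q x) (h1 : ∀ x, q x ≤ 1)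
    {φ ψ : ℝ → ℝ} (hψ : Continuous ψ) (hφ : ∀ t, HasDerivAt φ (ψ t) t)
    {a b : ℝ} (hab : a ≤ b) :
    ∫ u in a..b, ψ (∫ x in (0:ℝ)..u, q x) * q u
      = φ (∫ x in (0:ℝ)..b, q x) - φ (∫ x in (0:ℝ)..a, q x) := by
  set I : ℝ → ℝ := fun u => ∫ x in (0:ℝ)..u, q x with hIdef
  have hqint : ∀ c d : ℝ, IntervalIntegrable q volume c d := by
    intro c d
    refine (_root_.intervalIntegrable_const (c := (1:ℝ))).mono_fun hm.aestronglyMeasurable ?_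
    filter_upwards with x
    rw [Real.norm_eq_abs, Real.norm_eq_abs, abs_of_nonneg (h0 x), abs_one]
    exact h1 x
  have hIsub : ∀ c d : ℝ, I d - I c = ∫ x in c..d, q x := by
    intro c d
    exact integral_interval_sub_left (hqint 0 d) (hqint 0 c)
  have hImono : Monotone I := by
    intro c d hcd
    have h := intervalIntegral.integral_nonneg (μ := volume) hcd (fun x _ => h0 x)
    rw [← hIsub c d] at h
    linarith
  have hIcont : Continuous I := intervalIntegral.continuous_primitive hqint 0
  have hImeas : Measurable I := hIcont.measurable
  set ν : Measure ℝ := volume.withDensity fun u => ((q u).toNNReal : ℝ≥0∞) with hνdef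
  have hν : ∀ c d : ℝ, c ≤ d → ν (Ioc c d) = ENNReal.ofReal (I d - I c) := by
    intro c d hcd
    rw [hνdef, withDensity_apply _ measurableSet_Ioc]
    have hint : IntegrableOn q (Ioc c d) volume :=
      (intervalIntegrable_iff_integrableOn_Ioc_of_le hcd).mp (hqint c d)
    have := ofReal_integral_eq_lintegral_ofReal hint (Filter.Eventually.of_forall fun x => h0 x)
    rw [hIsub c d, intervalIntegral.integral_of_le hcd]
    exact this.symm
  haveI : IsFiniteMeasure (ν.restrict (Ioc a b)) := by
    constructor
    rw [Measure.restrict_apply_univ, hν a b hab]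
    exact ENNReal.ofReal_lt_top
  have hab' : I a ≤ I b := hImono hab
  have hmap : Measure.map I (ν.restrict (Ioc a b)) = volume.restrict (Ioc (I a) (I b)) := by
    refine Measure.ext_of_Iic _ _ fun x => ?_
    rw [Measure.map_apply hImeas measurableSet_Iic,
      Measure.restrict_apply (hImeas measurableSet_Iic), Measure.restrict_apply measurableSet_Iic]
    rcases lt_or_ge x (I a) with hx | hx
    · have h1 : I ⁻¹' Iic x ∩ Ioc a b = ∅ := by
        apply eq_empty_of_forall_notMem
        rintro u ⟨hu1, hu2⟩
        exact absurd ((hImono hu2.1.le).trans hu1) (not_le.mpr hx)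
      have h2 : Iic x ∩ Ioc (I a) (I b) = ∅ := by
        apply eq_empty_of_forall_notMem
        rintro t ⟨ht1, ht2⟩
        exact absurd (ht2.1.le.trans ht1) (not_le.mpr hx)
      rw [h1, h2]
      simp
    · set S : Set ℝ := {u | u ∈ Icc a b ∧ I u ≤ x} with hSdef
      have haS : a ∈ S := ⟨⟨le_refl a, hab⟩, hx⟩
      have hSne : S.Nonempty := ⟨a, haS⟩
      have hSbdd : BddAbove S := ⟨b, fun u hu => hu.1.2⟩
      set c := sSup S with hcdef
      have hac : a ≤ c := le_csSup hSbdd haS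
      have hcb : c ≤ b := csSup_le hSne fun u hu => hu.1.2
      have hIcx : I c ≤ x := by
        have hmem : c ∈ closure S := csSup_mem_closure hSne hSbdd
        have hclosed : IsClosed {u : ℝ | I u ≤ x} := isClosed_le hIcont continuous_const
        exact closure_minimal (fun u hu => hu.2) hclosed hmem
      have hIc : I c = min x (I b) := by
        refine le_antisymm (le_min hIcx (hImono hcb)) ?_
        by_contra h
        push_neg at h
        have hcb' : c < b := by
          rcases eq_or_lt_of_le hcb with heq | h'
          · exact absurd h (not_lt.mpr (by rw [heq]; exact min_le_right x (I b)))
          · exact h'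
        have hopen : IsOpen {u : ℝ | I u < x} :=
          isOpen_lt hIcont continuous_const
        have hcmem : c ∈ {u : ℝ | I u < x} := lt_of_lt_of_le h (min_le_left _ _)
        rcases Metric.isOpen_iff.mp hopen c hcmem with ⟨δ, hδ, hball⟩
        have hcu : c < min b (c + δ / 2) := lt_min hcb' (by linarith)
        have hub : min b (c + δ / 2) ≤ b := min_le_left _ _
        have huball : min b (c + δ / 2) ∈ Metric.ball c δ := by
          rw [Metric.mem_ball, Real.dist_eq, abs_of_nonneg (by linarith)]
          have h2 : min b (c + δ / 2) ≤ c + δ / 2 := min_le_right _ _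
          linarith
        have huS : min b (c + δ / 2) ∈ S := ⟨⟨hac.trans hcu.le, hub⟩, (hball huball).le⟩
        exact absurd (le_csSup hSbdd huS) (not_le.mpr hcu)
      have hset : I ⁻¹' Iic x ∩ Ioc a b = Ioc a c := by
        ext u
        constructor
        · rintro ⟨hu1, hu2⟩
          exact ⟨hu2.1, le_csSup hSbdd ⟨⟨hu2.1.le, hu2.2⟩, hu1⟩⟩
        · rintro ⟨hau, huc⟩
          refine ⟨?_, hau, huc.trans hcb⟩
          exact (hImono huc).trans (hIc.le.trans (min_le_left _ _))
      rw [hset, hν a c hac, hIc]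
      rw [inter_comm, Ioc_inter_Iic, Real.volume_Ioc, min_comm]
  have hDb : IntervalIntegrable ψ volume (I a) (I b) := hψ.intervalIntegrable _ _
  calc ∫ u in a..b, ψ (I u) * q u
      = ∫ u in Ioc a b, ψ (I u) * q u ∂volume := intervalIntegral.integral_of_le hab
    _ = ∫ u in Ioc a b, (q u).toNNReal • ψ (I u) ∂volume := by
        apply MeasureTheory.integral_congr_ae
        filter_upwards with u
        simp [NNReal.smul_def, Real.coe_toNNReal _ (h0 u), mul_comm]
    _ = ∫ u, ψ (I u) ∂((volume.restrict (Ioc a b)).withDensity fun u => ((q u).toNNReal : ℝ≥0∞)) :=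
        (integral_withDensity_eq_integral_smul hm.real_toNNReal _).symm
    _ = ∫ u, ψ (I u) ∂(ν.restrict (Ioc a b)) := by
        rw [hνdef, restrict_withDensity measurableSet_Ioc]
    _ = ∫ t, ψ t ∂(Measure.map I (ν.restrict (Ioc a b))) :=
        (integral_map hImeas.aemeasurable hψ.aestronglyMeasurable).symm
    _ = ∫ t in Ioc (I a) (I b), ψ t ∂volume := by rw [hmap]
    _ = ∫ t in (I a)..(I b), ψ t := (intervalIntegral.integral_of_le hab').symm
    _ = φ (I b) - φ (I a) :=
        intervalIntegral.integral_eq_sub_of_hasDerivAt (fun t _ => hφ t) hDb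

theorem F_equation_large_tau (α : ℝ) (hα : 0 < α) (q p : ℝ → ℝ) (F : ℝ → ℝ → ℝ)
    (hq01 : ∀ x : ℝ, q x ∈ Set.Icc (0 : ℝ) 1)
    (hqneg : ∀ x : ℝ, x < 0 → q x = 0)
    (hqint : ∀ a b : ℝ, IntervalIntegrable q MeasureTheory.volume a b)
    (hp : ∀ τ : ℝ, p τ = Real.exp (-(α * ∫ x in (0 : ℝ)..τ, q x)))
    (hpq : ∀ τ : ℝ, 1 < τ → 1 - q τ = p τ / p (τ - 1))
    (hF : ∀ s τ : ℝ, F s τ = 1 + q τ * (s - 1) / (1 - s + s * p τ)) :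
    ∀ τ : ℝ, 1 < τ → ∀ s ∈ Set.Ico (0 : ℝ) 1,
      F s τ = Real.exp (α * ∫ u in (τ - 1)..τ, (F s u - 1)) := by
  intro τ hτ s hs
  obtain ⟨hs0, hs1⟩ := hs
  have hab : τ - 1 ≤ τ := by linarith
  -- measurable representative of q
  have haesm : AEStronglyMeasurable q volume := by
    have hcover : (⋃ n : ℕ, Ioc (-(n:ℝ)) (n:ℝ)) = Set.univ := by
      ext x
      simp only [Set.mem_iUnion, Set.mem_Ioc, Set.mem_univ, iff_true]
      obtain ⟨n, hn⟩ := exists_nat_ge (|x| + 1)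
      have h1 := neg_abs_le x
      have h2 := le_abs_self x
      exact ⟨n, by linarith, by linarith⟩
    have h := aestronglyMeasurable_iUnion_iff.mpr
      (fun n : ℕ => (hqint (-(n:ℝ)) (n:ℝ)).1.aestronglyMeasurable)
    rwa [hcover, Measure.restrict_univ] at h
  set g0 := haesm.mk q with hg0def
  have hqg0 : q =ᵐ[volume] g0 := haesm.ae_eq_mk
  have hg0m : Measurable g0 := haesm.stronglyMeasurable_mk.measurable
  set g : ℝ → ℝ := fun x => max 0 (min 1 (g0 x)) with hgdef
  have hgm : Measurable g := measurable_const.max (measurable_const.min hg0m)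
  have hg_0 : ∀ x, 0 ≤ g x := fun x => le_max_left _ _
  have hg_1 : ∀ x, g x ≤ 1 := fun x => max_le zero_le_one (min_le_left _ _)
  have hqg : q =ᵐ[volume] g := by
    filter_upwards [hqg0] with x hx
    rw [hgdef]
    dsimp only
    rw [← hx, min_eq_right (hq01 x).2, max_eq_right (hq01 x).1]
  have hIeq : ∀ u : ℝ, (∫ x in (0:ℝ)..u, g x) = ∫ x in (0:ℝ)..u, q x := by
    intro u
    apply intervalIntegral.integral_congr_ae
    filter_upwards [hqg] with x hx
    exact fun _ => hx.symm
  -- the functions ψ and φ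
  set D : ℝ → ℝ := fun t => 1 - s + s * Real.exp (-(α * t)) with hDdef
  have hDpos : ∀ t, 0 < D t := by
    intro t
    have h2 : 0 ≤ s * Real.exp (-(α * t)) := mul_nonneg hs0 (Real.exp_pos _).le
    rw [hDdef]
    dsimp only
    linarith
  set ψ : ℝ → ℝ := fun t => α * (s - 1) / D t with hψdef
  set φ : ℝ → ℝ := fun t => -(α * t) - Real.log (D t) with hφdef
  have hDcont : Continuous D := by
    rw [hDdef]
    fun_prop
  have hψcont : Continuous ψ := continuous_const.div hDcont fun t => (hDpos t).ne'
  have hφderiv : ∀ t, HasDerivAt φ (ψ t) t := by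
    intro t
    have h1 : HasDerivAt (fun t : ℝ => -(α * t)) (-α) t := by
      have h := ((hasDerivAt_id t).const_mul α).neg
      simp only [id, mul_one] at h
      exact h
    have hD' : HasDerivAt D (s * (Real.exp (-(α * t)) * (-α))) t := by
      rw [hDdef]
      exact ((h1.exp).const_mul s).const_add (1 - s)
    have hlog : HasDerivAt (fun u => Real.log (D u))
        (s * (Real.exp (-(α * t)) * (-α)) / D t) t := hD'.log (hDpos t).ne'
    have hsub := h1.sub hlog
    rw [hφdef]
    refine HasDerivAt.congr_deriv hsub ?_
    rw [hψdef]
    have hD0 := (hDpos t).ne'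
    dsimp only
    rw [hDdef]
    dsimp only
    field_simp
    ring
  have hkey := key_subst hgm hg_0 hg_1 hψcont hφderiv hab
  have e1 : ∫ u in (τ-1)..τ, α * (F s u - 1)
      = φ (∫ x in (0:ℝ)..τ, q x) - φ (∫ x in (0:ℝ)..(τ-1), q x) := by
    rw [← hIeq τ, ← hIeq (τ - 1), ← hkey]
    apply intervalIntegral.integral_congr_ae
    filter_upwards [hqg] with u hu
    intro _
    rw [hF, hp u, hIeq u, ← hu, hψdef, hDdef]
    dsimp only
    ring
  have e2 : α * ∫ u in (τ-1)..τ, (F s u - 1)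
      = φ (∫ x in (0:ℝ)..τ, q x) - φ (∫ x in (0:ℝ)..(τ-1), q x) := by
    rw [← e1, intervalIntegral.integral_const_mul]
  rw [e2]
  -- now compute the exponential
  have hpb : p τ = Real.exp (-(α * ∫ x in (0:ℝ)..τ, q x)) := hp τ
  have hpa : p (τ-1) = Real.exp (-(α * ∫ x in (0:ℝ)..(τ-1), q x)) := hp (τ-1)
  have hpbpos : 0 < p τ := hpb ▸ Real.exp_pos _
  have hpapos : 0 < p (τ-1) := hpa ▸ Real.exp_pos _
  have hDbpos : 0 < 1 - s + s * p τ := by nlinarith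
  have hDapos : 0 < 1 - s + s * p (τ-1) := by nlinarith
  have e3 : Real.exp (φ (∫ x in (0:ℝ)..τ, q x) - φ (∫ x in (0:ℝ)..(τ-1), q x))
      = (p τ / (1 - s + s * p τ)) / (p (τ-1) / (1 - s + s * p (τ-1))) := by
    rw [hφdef]
    dsimp only
    rw [Real.exp_sub, Real.exp_sub, Real.exp_sub, Real.exp_log (hDpos _),
      Real.exp_log (hDpos _), ← hpb, ← hpa, hDdef]
    dsimp only
    rw [← hpb, ← hpa]
  rw [e3, hF]
  have hqτ : q τ = 1 - p τ / p (τ - 1) := by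
    have := hpq τ hτ
    linarith
  rw [hqτ]
  field_simp
  ring
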